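/- Let (Ω, F, P) be a probability space with a filtration (F_t) for t = 0, 1, …, T, and let (D_t)_{t=0}^{T} be an adapted process of nonnegative real random variables. Let D > 0, η > 0, and γ ∈ (0, 1) be such that: D_0 ≤ D almost surely; D_{t+1} ≤ D_t almost surely for every t < T; for every t < T, the conditional probability P[D_{t+1} ≤ max((1−γ)·D_t, η) | F_t] ≥ 1/2 almost surely; and (1 − γ)^{⌈T/4⌉}·D ≤ η. Then P[D_T > η] ≤ exp(−T/16). -/

import Mathlib

open MeasureTheory ProbabilityTheory
open scoped ENNReal

/-- Per-point convergence of the non-private evolution algorithm: a nonnegative adapted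
process `D_t` that never increases and, with conditional probability at least `1/2` given
the past, contracts by a factor `(1-γ)` (or drops below `η`), ends below `η` after `T`
iterations except with probability `exp(−T/16)`, provided `(1-γ)^⌈T/4⌉·D ≤ η`. -/
theorem contraction_process_convergence
    {Ω : Type*} {m : MeasurableSpace Ω} (P : Measure Ω) [IsProbabilityMeasure P]
    (T : ℕ) (ℱ : Filtration ℕ m) (D : ℕ → Ω → ℝ)
    (hmeas : ∀ t, t ≤ T → StronglyMeasurable[ℱ t] (D t))
    (hnonneg : ∀ t, t ≤ T → ∀ ω, 0 ≤ D t ω)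
    (Dmax η γ : ℝ) (hDmax : 0 < Dmax) (hη : 0 < η) (hγ0 : 0 < γ) (hγ1 : γ < 1)
    (h0 : ∀ᵐ ω ∂P, D 0 ω ≤ Dmax)
    (hmono : ∀ t, t < T → ∀ᵐ ω ∂P, D (t + 1) ω ≤ D t ω)
    (hcond : ∀ t, t < T → ∀ᵐ ω ∂P, (1 : ℝ) / 2 ≤
      (P[Set.indicator {ω' | D (t + 1) ω' ≤ max ((1 - γ) * D t ω') η}
          (fun _ => (1 : ℝ)) | ℱ t]) ω)
    (hcontract : (1 - γ) ^ (⌈(T : ℝ) / 4⌉₊) * Dmax ≤ η) :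
    P {ω | η < D T ω} ≤ ENNReal.ofReal (Real.exp (-(T : ℝ) / 16)) := by
  classical
  set k : ℕ := ⌈(T : ℝ) / 4⌉₊ with hkdef
  have h1γ0 : (0 : ℝ) < 1 - γ := by linarith
  have h1γ1 : (1 : ℝ) - γ ≤ 1 := by linarith
  -- the contraction events, the indicator variables, the running product
  set E : ℕ → Set Ω := fun t => {ω' | D (t + 1) ω' ≤ max ((1 - γ) * D t ω') η} with hEdef
  set X : ℕ → Ω → ℝ := fun t => Set.indicator (E t) (fun _ => (1 : ℝ)) with hXdef
  set W : ℕ → Ω → ℝ := fun n ω => ∏ t ∈ Finset.range n, (1 - (1 / 2) * X t ω) with hWdef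
  have hX01 : ∀ t ω, X t ω = 0 ∨ X t ω = 1 := by
    intro t ω
    by_cases h : ω ∈ E t <;> simp [hXdef, Set.indicator_apply, h]
  have hfac_lb : ∀ t ω, (1 : ℝ) / 2 ≤ 1 - (1 / 2) * X t ω := by
    intro t ω; rcases hX01 t ω with h | h <;> rw [h] <;> norm_num
  have hfac_ub : ∀ t ω, (1 : ℝ) - (1 / 2) * X t ω ≤ 1 := by
    intro t ω; rcases hX01 t ω with h | h <;> rw [h] <;> norm_num
  have hWnn : ∀ n ω, 0 ≤ W n ω := by
    intro n ω
    exact Finset.prod_nonneg fun t _ => le_trans (by norm_num) (hfac_lb t ω)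
  have hWle1 : ∀ n ω, W n ω ≤ 1 := by
    intro n ω
    exact Finset.prod_le_one (fun t _ => le_trans (by norm_num) (hfac_lb t ω))
      (fun t _ => hfac_ub t ω)
  have hWsucc : ∀ n ω, W (n + 1) ω = W n ω * (1 - (1 / 2) * X n ω) := by
    intro n ω; simp [hWdef, Finset.prod_range_succ]
  -- measurability
  have hEmeas : ∀ t, t < T → MeasurableSet[ℱ (t + 1)] (E t) := by
    intro t ht
    have h1 : StronglyMeasurable[ℱ (t + 1)] (D (t + 1)) := hmeas (t + 1) (by omega)
    have h2 : StronglyMeasurable[ℱ (t + 1)] (D t) :=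
      (hmeas t (by omega)).mono (ℱ.mono (Nat.le_succ t))
    exact measurableSet_le h1.measurable
      ((measurable_const.mul h2.measurable).max measurable_const)
  have hXmeas : ∀ t, t < T → StronglyMeasurable[ℱ (t + 1)] (X t) := fun t ht =>
    stronglyMeasurable_const.indicator (hEmeas t ht)
  have hWmeas : ∀ n, n ≤ T → StronglyMeasurable[ℱ n] (W n) := by
    intro n
    induction n with
    | zero =>
      intro _
      have : W 0 = fun _ => (1 : ℝ) := by funext ω; simp [hWdef]
      rw [this]; exact stronglyMeasurable_const
    | succ n ih =>
      intro hn
      have : W (n + 1) = fun ω => W n ω * (1 - (1 / 2) * X n ω) := by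
        funext ω; exact hWsucc n ω
      rw [this]
      exact ((ih (by omega)).mono (ℱ.mono (Nat.le_succ n))).mul
        (stronglyMeasurable_const.sub (stronglyMeasurable_const.mul (hXmeas n (by omega))))
  -- integrability
  have hbdd_int : ∀ (f : Ω → ℝ), AEStronglyMeasurable f P → (∀ ω, ‖f ω‖ ≤ 1) →
      Integrable f P := by
    intro f hf hb
    exact (integrable_const (1 : ℝ)).mono' hf (Filter.Eventually.of_forall hb)
  have hWint : ∀ n, n ≤ T → Integrable (W n) P := by
    intro n hn
    refine hbdd_int _ (((hWmeas n hn).mono (ℱ.le n)).aestronglyMeasurable) ?_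
    intro ω
    rw [Real.norm_eq_abs, abs_of_nonneg (hWnn n ω)]
    exact hWle1 n ω
  have hXnorm : ∀ t ω, ‖X t ω‖ ≤ 1 := by
    intro t ω
    rcases hX01 t ω with h | h <;> rw [h] <;> norm_num
  have hXint : ∀ t, t < T → Integrable (X t) P := by
    intro t ht
    exact hbdd_int _ (((hXmeas t ht).mono (ℱ.le (t + 1))).aestronglyMeasurable) (hXnorm t)
  have hWXint : ∀ n, n < T → Integrable (W n * X n) P := by
    intro n hn
    refine hbdd_int _ ?_ ?_
    · exact (((hWmeas n hn.le).mono (ℱ.le n)).mul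
        ((hXmeas n hn).mono (ℱ.le (n + 1)))).aestronglyMeasurable
    · intro ω
      have := hXnorm n ω
      have h1 := hWnn n ω
      have h2 := hWle1 n ω
      rw [Pi.mul_apply, norm_mul]
      calc ‖W n ω‖ * ‖X n ω‖ ≤ 1 * 1 := by
            refine mul_le_mul ?_ this (norm_nonneg _) zero_le_one
            rw [Real.norm_eq_abs, abs_of_nonneg h1]; exact h2
        _ = 1 := by norm_num
  -- the key single-step inequality
  have hstep : ∀ n, n < T → ∫ ω, W (n + 1) ω ∂P ≤ (3 / 4) * ∫ ω, W n ω ∂P := by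
    intro n hn
    have hpull : P[W n * X n | ℱ n] =ᵐ[P] W n * P[X n | ℱ n] := by
      refine condExp_stronglyMeasurable_mul_of_bound (ℱ.le n) (hWmeas n hn.le)
        (hXint n hn) 1 (Filter.Eventually.of_forall fun ω => ?_)
      rw [Real.norm_eq_abs, abs_of_nonneg (hWnn n ω)]; exact hWle1 n ω
    have hI2 : Integrable (W n * P[X n | ℱ n]) P := integrable_condExp.congr hpull
    have hXge : (1 / 2 : ℝ) * ∫ ω, W n ω ∂P ≤ ∫ ω, (W n * X n) ω ∂P := by
      have h1 : ∫ ω, (W n * X n) ω ∂P = ∫ ω, (P[W n * X n | ℱ n]) ω ∂P :=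
        (integral_condExp (ℱ.le n)).symm
      have h2 : ∫ ω, (P[W n * X n | ℱ n]) ω ∂P = ∫ ω, (W n * P[X n | ℱ n]) ω ∂P :=
        integral_congr_ae hpull
      have h3 : ∫ ω, (1 / 2 : ℝ) * W n ω ∂P ≤ ∫ ω, (W n * P[X n | ℱ n]) ω ∂P := by
        refine integral_mono_ae ((hWint n hn.le).const_mul _) hI2 ?_
        filter_upwards [hcond n hn] with ω hω
        have hc : (1 / 2 : ℝ) ≤ (P[X n | ℱ n]) ω := hω
        have := mul_le_mul_of_nonneg_left hc (hWnn n ω)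
        calc (1 / 2 : ℝ) * W n ω = W n ω * (1 / 2) := by ring
          _ ≤ W n ω * (P[X n | ℱ n]) ω := this
          _ = (W n * P[X n | ℱ n]) ω := rfl
      rw [integral_const_mul] at h3
      rw [h1, h2]; exact h3
    have hsplit : ∫ ω, W (n + 1) ω ∂P
        = ∫ ω, W n ω ∂P - (1 / 2) * ∫ ω, (W n * X n) ω ∂P := by
      have heq : ∀ ω, W (n + 1) ω = W n ω - (1 / 2) * ((W n * X n) ω) := by
        intro ω; rw [hWsucc n ω]; simp [Pi.mul_apply]; ring
      calc ∫ ω, W (n + 1) ω ∂P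
          = ∫ ω, (W n ω - (1 / 2) * ((W n * X n) ω)) ∂P :=
            integral_congr_ae (Filter.Eventually.of_forall heq)
        _ = ∫ ω, W n ω ∂P - ∫ ω, (1 / 2) * ((W n * X n) ω) ∂P :=
            integral_sub (hWint n hn.le) ((hWXint n hn).const_mul _)
        _ = ∫ ω, W n ω ∂P - (1 / 2) * ∫ ω, (W n * X n) ω ∂P := by
            rw [integral_const_mul]
    rw [hsplit]; linarith
  -- iterate
  have hWT : ∀ n, n ≤ T → ∫ ω, W n ω ∂P ≤ (3 / 4 : ℝ) ^ n := by
    intro n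
    induction n with
    | zero =>
      intro _
      have : W 0 = fun _ => (1 : ℝ) := by funext ω; simp [hWdef]
      rw [this]
      simp
    | succ n ih =>
      intro hn
      have h1 := hstep n (by omega)
      have h2 := ih (by omega)
      calc ∫ ω, W (n + 1) ω ∂P ≤ (3 / 4) * ∫ ω, W n ω ∂P := h1
        _ ≤ (3 / 4) * (3 / 4 : ℝ) ^ n := by nlinarith
        _ = (3 / 4 : ℝ) ^ (n + 1) := by ring
  -- counting process and deterministic contraction
  set N : ℕ → Ω → ℕ := fun n ω => ((Finset.range n).filter (fun t => ω ∈ E t)).card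
    with hNdef
  have hWN : ∀ ω n, W n ω = (1 / 2 : ℝ) ^ (N n ω) := by
    intro ω n
    induction n with
    | zero => simp [hWdef, hNdef]
    | succ n ih =>
      rw [hWsucc n ω, ih]
      by_cases h : ω ∈ E n
      · have hX : X n ω = 1 := by simp [hXdef, Set.indicator_apply, h]
        have hN : N (n + 1) ω = N n ω + 1 := by
          simp [hNdef, Finset.range_add_one, Finset.filter_insert, h,
            Finset.card_insert_of_notMem (by simp : n ∉ Finset.range n)]
        rw [hX, hN, pow_succ]; norm_num
      · have hX : X n ω = 0 := by simp [hXdef, Set.indicator_apply, h]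
        have hN : N (n + 1) ω = N n ω := by
          simp [hNdef, Finset.range_add_one, Finset.filter_insert, h]
        rw [hX, hN]; norm_num
  set c : ℝ := 2 * (1 / 2 : ℝ) ^ k with hcdef
  have hcpos : (0 : ℝ) < c := by positivity
  -- a.e., if D T is still above η then few contractions happened, so W T is large
  have hae : ∀ᵐ ω ∂P, η < D T ω → c ≤ W T ω := by
    have hmono' : ∀ᵐ ω ∂P, ∀ t, t < T → D (t + 1) ω ≤ D t ω := by
      rw [MeasureTheory.ae_all_iff]
      intro t
      by_cases ht : t < T
      · filter_upwards [hmono t ht] with ω h _; exact h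
      · filter_upwards with ω h; exact absurd h ht
    filter_upwards [h0, hmono'] with ω hω0 hωm hηD
    -- deterministic bound
    have key : ∀ n, n ≤ T → D n ω ≤ max ((1 - γ) ^ (N n ω) * Dmax) η := by
      intro n
      induction n with
      | zero =>
        intro _
        have : N 0 ω = 0 := by simp [hNdef]
        rw [this, pow_zero, one_mul]
        exact le_trans hω0 (le_max_left _ _)
      | succ n ih =>
        intro hn
        have ihn := ih (by omega)
        by_cases h : ω ∈ E n
        · have hN : N (n + 1) ω = N n ω + 1 := by
            simp [hNdef, Finset.range_add_one, Finset.filter_insert, h,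
              Finset.card_insert_of_notMem (by simp : n ∉ Finset.range n)]
          have hDn : D (n + 1) ω ≤ max ((1 - γ) * D n ω) η := h
          have hstep2 : (1 - γ) * D n ω ≤ max ((1 - γ) ^ (N n ω + 1) * Dmax) η := by
            calc (1 - γ) * D n ω
                ≤ (1 - γ) * max ((1 - γ) ^ (N n ω) * Dmax) η :=
                  mul_le_mul_of_nonneg_left ihn h1γ0.le
              _ = max ((1 - γ) * ((1 - γ) ^ (N n ω) * Dmax)) ((1 - γ) * η) :=
                  mul_max_of_nonneg _ _ h1γ0.le
              _ ≤ max ((1 - γ) ^ (N n ω + 1) * Dmax) η := by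
                  refine max_le_max (le_of_eq (by ring)) ?_
                  nlinarith
          rw [hN]
          exact le_trans hDn (max_le hstep2 (le_max_right _ _))
        · have hN : N (n + 1) ω = N n ω := by
            simp [hNdef, Finset.range_add_one, Finset.filter_insert, h]
          rw [hN]
          exact le_trans (hωm n (by omega)) ihn
    have hDT := key T le_rfl
    have hbig : η < (1 - γ) ^ (N T ω) * Dmax := by
      rcases max_cases ((1 - γ) ^ (N T ω) * Dmax) η with ⟨heq, _⟩ | ⟨heq, hlt⟩
      · rw [heq] at hDT; exact lt_of_lt_of_le hηD hDT
      · rw [heq] at hDT; exact absurd (lt_of_lt_of_le hηD hDT) (lt_irrefl η)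
    have hpow : (1 - γ) ^ k * Dmax < (1 - γ) ^ (N T ω) * Dmax :=
      lt_of_le_of_lt hcontract hbig
    have hNk : N T ω < k := by
      have := (mul_lt_mul_iff_left₀ hDmax).mp hpow
      exact ((pow_lt_pow_iff_right_of_lt_one₀ h1γ0 (by linarith)).mp this)
    obtain ⟨k', hk'⟩ : ∃ k', k = k' + 1 := ⟨k - 1, by omega⟩
    have hNle : N T ω ≤ k' := by omega
    have h1 : (1 / 2 : ℝ) ^ k' ≤ (1 / 2 : ℝ) ^ (N T ω) :=
      pow_le_pow_of_le_one (by norm_num) (by norm_num) hNle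
    rw [hWN ω T, hcdef, hk', pow_succ]
    linarith
  -- Markov
  have hmarkov : c * (P {ω | c ≤ W T ω}).toReal ≤ ∫ ω, W T ω ∂P :=
    mul_meas_ge_le_integral_of_nonneg (Filter.Eventually.of_forall (hWnn T))
      (hWint T le_rfl) c
  have hsub : P {ω | η < D T ω} ≤ P {ω | c ≤ W T ω} := by
    refine measure_mono_ae ?_
    filter_upwards [hae] with ω h
    exact fun hx => h hx
  -- final numeric estimate
  have hklt : (k : ℝ) < (T : ℝ) / 4 + 1 := Nat.ceil_lt_add_one (by positivity)
  have hlog2 : (0 : ℝ) ≤ Real.log 2 := Real.log_nonneg (by norm_num)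
  have hlogkey : Real.log (3 / 4) + Real.log 2 / 4 + 1 / 16 ≤ 0 := by
    have hexp : Real.exp ((1 : ℝ) / 4) ≤ 4 / 3 := by
      have h := Real.add_one_le_exp (-(1 / 4) : ℝ)
      rw [Real.exp_neg] at h
      have hp := Real.exp_pos ((1 : ℝ) / 4)
      have h' : (3 / 4 : ℝ) ≤ (Real.exp ((1 : ℝ) / 4))⁻¹ := by linarith
      have h2 : Real.exp ((1 : ℝ) / 4) * (3 / 4) ≤ 1 := by
        calc Real.exp ((1 : ℝ) / 4) * (3 / 4)
            ≤ Real.exp ((1 : ℝ) / 4) * (Real.exp ((1 : ℝ) / 4))⁻¹ :=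
              mul_le_mul_of_nonneg_left h' hp.le
          _ = 1 := mul_inv_cancel₀ hp.ne'
      linarith
    have h2 : (1 : ℝ) / 4 ≤ Real.log (128 / 81) := by
      rw [Real.le_log_iff_exp_le (by norm_num)]
      linarith
    have h128 : Real.log (128 / 81 : ℝ) = 7 * Real.log 2 - 4 * Real.log 3 := by
      rw [show (128 / 81 : ℝ) = 2 ^ 7 / 3 ^ 4 by norm_num,
        Real.log_div (by norm_num) (by norm_num), Real.log_pow, Real.log_pow]
      push_cast; ring
    have h34 : Real.log (3 / 4 : ℝ) = Real.log 3 - 2 * Real.log 2 := by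
      rw [show (3 / 4 : ℝ) = 3 / 2 ^ 2 by norm_num,
        Real.log_div (by norm_num) (by norm_num), Real.log_pow]
      push_cast; ring
    rw [h128] at h2
    rw [h34]
    linarith
  have hreal : (3 / 4 : ℝ) ^ T ≤ c * Real.exp (-(T : ℝ) / 16) := by
    have hT0 : (0 : ℝ) ≤ (T : ℝ) := Nat.cast_nonneg T
    have hexpo : (T : ℝ) * Real.log (3 / 4)
        ≤ Real.log 2 + ((k : ℝ) * -Real.log 2 + -(T : ℝ) / 16) := by
      have hmul := mul_le_mul_of_nonneg_left hlogkey hT0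
      have hk2 : (k : ℝ) * Real.log 2 ≤ ((T : ℝ) / 4 + 1) * Real.log 2 :=
        mul_le_mul_of_nonneg_right hklt.le hlog2
      nlinarith
    calc (3 / 4 : ℝ) ^ T = Real.exp ((T : ℝ) * Real.log (3 / 4)) := by
          rw [Real.exp_nat_mul, Real.exp_log (by norm_num : (0 : ℝ) < 3 / 4)]
      _ ≤ Real.exp (Real.log 2 + ((k : ℝ) * -Real.log 2 + -(T : ℝ) / 16)) :=
          Real.exp_le_exp.mpr hexpo
      _ = 2 * ((1 / 2 : ℝ) ^ k * Real.exp (-(T : ℝ) / 16)) := by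
          rw [Real.exp_add, Real.exp_add, Real.exp_log (by norm_num : (0 : ℝ) < 2)]
          congr 2
          rw [show (k : ℝ) * -Real.log 2 = (k : ℝ) * Real.log (1 / 2) by
            rw [one_div, Real.log_inv]]
          rw [Real.exp_nat_mul, Real.exp_log (by norm_num : (0 : ℝ) < 1 / 2)]
      _ = c * Real.exp (-(T : ℝ) / 16) := by rw [hcdef]; ring
  have htoReal : (P {ω | c ≤ W T ω}).toReal ≤ Real.exp (-(T : ℝ) / 16) := by
    have h1 : c * (P {ω | c ≤ W T ω}).toReal ≤ c * Real.exp (-(T : ℝ) / 16) :=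
      le_trans hmarkov (le_trans (hWT T le_rfl) hreal)
    exact le_of_mul_le_mul_left h1 hcpos
  calc P {ω | η < D T ω} ≤ P {ω | c ≤ W T ω} := hsub
    _ = ENNReal.ofReal (P {ω | c ≤ W T ω}).toReal :=
        (ENNReal.ofReal_toReal (measure_ne_top P _)).symm
    _ ≤ ENNReal.ofReal (Real.exp (-(T : ℝ) / 16)) := ENNReal.ofReal_le_ofReal htoReal
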